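/- Let H be a real Hilbert space, let (Ω, F, ℙ) be a probability space, and let W : Ω → {subspaces of H} be a random finite-dimensional subspace of H such that ω ↦ dim(W(ω)) and, for each i, ω ↦ inf_{g ∈ W(ω)} ‖g − φ_i‖² are measurable and integrable. Let φ₁, …, φ_N ∈ H satisfy ‖φ_i‖² = 1 for all i, let r := E[dim(W)] < ∞, and define ε := (1/N) · Σ_{i=1}^N E[ inf_{g ∈ W} ‖g − φ_i‖² ]. Then r ≥ N · (1 − ε) / (1 + √(Σ_{i ≠ j} ⟨φ_i, φ_j⟩²)). -/

import Mathlib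

open Finset MeasureTheory
open scoped RealInnerProductSpace

/-- Per-vector bound: for a unit vector `e`, `∑ i, ⟪φ i, e⟫² ≤ 1 + √S`. -/
lemma keyA_dlbr {H : Type*} [NormedAddCommGroup H] [InnerProductSpace ℝ H]
    (N : ℕ) (φ : Fin N → H) (hφ : ∀ i, ‖φ i‖ ^ 2 = 1) (e : H) (he : ‖e‖ = 1) :
    ∑ i, ⟪φ i, e⟫ ^ 2 ≤ 1 + Real.sqrt (∑ p ∈ (univ : Finset (Fin N × Fin N)).filter
      (fun p => p.1 ≠ p.2), ⟪φ p.1, φ p.2⟫ ^ 2) := by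
  set S := ∑ p ∈ (univ : Finset (Fin N × Fin N)).filter (fun p => p.1 ≠ p.2),
    ⟪φ p.1, φ p.2⟫ ^ 2 with hSdef
  have hS0 : 0 ≤ S := Finset.sum_nonneg fun p _ => sq_nonneg _
  set c : Fin N → ℝ := fun i => ⟪φ i, e⟫ with hc
  set x := ∑ i, c i ^ 2 with hxdef
  have hx0 : 0 ≤ x := Finset.sum_nonneg fun i _ => sq_nonneg _
  set v := ∑ i, c i • φ i with hv
  have hve : ⟪v, e⟫ = x := by
    simp [hv, sum_inner, real_inner_smul_left, hxdef, sq, hc]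
  have hx2 : x ^ 2 ≤ ‖v‖ ^ 2 := by
    have h1 := abs_real_inner_le_norm v e
    calc x ^ 2 = |⟪v, e⟫| ^ 2 := by rw [sq_abs, hve]
      _ ≤ (‖v‖ * ‖e‖) ^ 2 := pow_le_pow_left₀ (abs_nonneg _) h1 2
      _ = ‖v‖ ^ 2 := by rw [he, mul_one]
  have hvnorm : ‖v‖ ^ 2 = ∑ i, ∑ j, c i * c j * ⟪φ i, φ j⟫ := by
    rw [← real_inner_self_eq_norm_sq, hv, sum_inner]
    refine Finset.sum_congr rfl fun i _ => ?_
    rw [real_inner_smul_left, inner_sum, Finset.mul_sum]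
    refine Finset.sum_congr rfl fun j _ => ?_
    rw [real_inner_smul_right]; ring
  -- split into diagonal and off-diagonal
  set g : Fin N × Fin N → ℝ := fun p => c p.1 * c p.2 * ⟪φ p.1, φ p.2⟫ with hg
  have hprod : ∑ i, ∑ j, c i * c j * ⟪φ i, φ j⟫ = ∑ p ∈ (univ : Finset (Fin N × Fin N)), g p := by
    rw [← Finset.univ_product_univ, Finset.sum_product]
  have hsplit : ∑ p ∈ (univ : Finset (Fin N × Fin N)), g p
      = ∑ p ∈ univ.filter (fun p : Fin N × Fin N => p.1 = p.2), g p
        + ∑ p ∈ univ.filter (fun p : Fin N × Fin N => ¬ p.1 = p.2), g p :=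
    (Finset.sum_filter_add_sum_filter_not _ _ _).symm
  have hdiagset : (univ : Finset (Fin N × Fin N)).filter (fun p => p.1 = p.2)
      = univ.image (fun i => (i, i)) := by
    ext p; simp only [mem_filter, mem_univ, true_and, mem_image]
    constructor
    · intro h; exact ⟨p.1, by ext <;> simp [h]⟩
    · rintro ⟨i, rfl⟩; rfl
  have hdiag : ∑ p ∈ (univ : Finset (Fin N × Fin N)).filter (fun p => p.1 = p.2), g p = x := by
    rw [hdiagset, Finset.sum_image (by intro a _ b _ h; exact (Prod.mk.injEq _ _ _ _ ▸ h).1)]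
    refine Finset.sum_congr rfl fun i _ => ?_
    have : ⟪φ i, φ i⟫ = 1 := by rw [real_inner_self_eq_norm_sq, hφ i]
    have h2 : ‖φ i‖ * ‖φ i‖ = 1 := by rw [← sq, hφ i]
    simp [hg, this, sq, h2]
  set a := ∑ p ∈ (univ : Finset (Fin N × Fin N)).filter (fun p : Fin N × Fin N => ¬ p.1 = p.2), g p
    with ha
  have hsum_sq : ∑ p ∈ (univ : Finset (Fin N × Fin N)), (c p.1 * c p.2) ^ 2 = x ^ 2 := by
    rw [← Finset.univ_product_univ, Finset.sum_product, hxdef]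
    rw [sq (∑ i, c i ^ 2), Finset.sum_mul_sum]
    exact Finset.sum_congr rfl fun i _ => Finset.sum_congr rfl fun j _ => by ring
  have ha2 : a ^ 2 ≤ x ^ 2 * S := by
    have hcs := Finset.sum_mul_sq_le_sq_mul_sq
      ((univ : Finset (Fin N × Fin N)).filter (fun p : Fin N × Fin N => ¬ p.1 = p.2))
      (fun p => c p.1 * c p.2) (fun p => ⟪φ p.1, φ p.2⟫)
    have hle : ∑ p ∈ (univ : Finset (Fin N × Fin N)).filter (fun p : Fin N × Fin N => ¬ p.1 = p.2),
        (c p.1 * c p.2) ^ 2 ≤ x ^ 2 := by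
      rw [← hsum_sq]
      exact Finset.sum_le_sum_of_subset_of_nonneg (Finset.filter_subset _ _)
        (fun p _ _ => sq_nonneg _)
    calc a ^ 2 ≤ (∑ p ∈ (univ : Finset (Fin N × Fin N)).filter (fun p : Fin N × Fin N => ¬ p.1 = p.2),
          (c p.1 * c p.2) ^ 2) * S := hcs
      _ ≤ x ^ 2 * S := mul_le_mul_of_nonneg_right hle hS0
  have haux : a ≤ x * Real.sqrt S := by
    calc a ≤ |a| := le_abs_self a
      _ = Real.sqrt (a ^ 2) := (Real.sqrt_sq_eq_abs a).symm
      _ ≤ Real.sqrt (x ^ 2 * S) := Real.sqrt_le_sqrt ha2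
      _ = x * Real.sqrt S := by
          rw [Real.sqrt_mul (sq_nonneg x), Real.sqrt_sq hx0]
  have hfinal : x ^ 2 ≤ x + x * Real.sqrt S := by
    have : ‖v‖ ^ 2 = x + a := by rw [hvnorm, hprod, hsplit, hdiag]
    nlinarith [hx2]
  nlinarith [Real.sqrt_nonneg S, hx0, hfinal]

/-- Summing over an orthonormal basis of `K`:
`∑ i, ‖P_K φ i‖² ≤ dim K · (1 + √S)`. -/
lemma keyB_dlbr {H : Type*} [NormedAddCommGroup H] [InnerProductSpace ℝ H] [CompleteSpace H]
    (N : ℕ) (φ : Fin N → H) (hφ : ∀ i, ‖φ i‖ ^ 2 = 1)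
    (K : Submodule ℝ H) [FiniteDimensional ℝ K] :
    ∑ i, ‖(Submodule.orthogonalProjectionOnto K (φ i) : H)‖ ^ 2 ≤
      (Module.finrank ℝ K : ℝ) * (1 + Real.sqrt (∑ p ∈ (univ : Finset (Fin N × Fin N)).filter
        (fun p => p.1 ≠ p.2), ⟪φ p.1, φ p.2⟫ ^ 2)) := by
  set S := ∑ p ∈ (univ : Finset (Fin N × Fin N)).filter (fun p => p.1 ≠ p.2),
    ⟪φ p.1, φ p.2⟫ ^ 2 with hSdef
  set b := stdOrthonormalBasis ℝ K with hb
  have hnorm : ∀ i, ‖(Submodule.orthogonalProjectionOnto K (φ i) : H)‖ ^ 2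
      = ∑ m, ⟪φ i, (b m : H)⟫ ^ 2 := by
    intro i
    have h := b.sum_inner_mul_inner (Submodule.orthogonalProjectionOnto K (φ i)) (Submodule.orthogonalProjectionOnto K (φ i))
    have hcoe : ‖(Submodule.orthogonalProjectionOnto K (φ i) : H)‖ = ‖Submodule.orthogonalProjectionOnto K (φ i)‖ := rfl
    rw [hcoe, ← real_inner_self_eq_norm_sq, ← h]
    refine Finset.sum_congr rfl fun m _ => ?_
    have hm : ⟪b m, Submodule.orthogonalProjectionOnto K (φ i)⟫ = ⟪(b m : H), φ i⟫ :=
      Submodule.inner_orthogonalProjectionOnto_eq_of_mem_left (b m) (φ i)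
    calc ⟪Submodule.orthogonalProjectionOnto K (φ i), b m⟫ * ⟪b m, Submodule.orthogonalProjectionOnto K (φ i)⟫
        = ⟪b m, Submodule.orthogonalProjectionOnto K (φ i)⟫ * ⟪b m, Submodule.orthogonalProjectionOnto K (φ i)⟫ := by
          rw [real_inner_comm]
      _ = ⟪φ i, (b m : H)⟫ ^ 2 := by
          rw [hm, real_inner_comm ((b m : H)) (φ i)]; ring
  calc ∑ i, ‖(Submodule.orthogonalProjectionOnto K (φ i) : H)‖ ^ 2
      = ∑ i, ∑ m, ⟪φ i, (b m : H)⟫ ^ 2 := Finset.sum_congr rfl fun i _ => hnorm i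
    _ = ∑ m, ∑ i, ⟪φ i, (b m : H)⟫ ^ 2 := Finset.sum_comm
    _ ≤ ∑ _m : Fin (Module.finrank ℝ K), (1 + Real.sqrt S) := by
        refine Finset.sum_le_sum fun m _ => ?_
        refine keyA_dlbr N φ hφ (b m : H) ?_
        have := b.orthonormal.1 m
        exact this
    _ = (Module.finrank ℝ K : ℝ) * (1 + Real.sqrt S) := by
        rw [Finset.sum_const, Finset.card_univ, Fintype.card_fin, nsmul_eq_mul]

/-- The infimum of squared distances to a finite-dimensional subspace. -/
lemma keyC_dlbr {H : Type*} [NormedAddCommGroup H] [InnerProductSpace ℝ H] [CompleteSpace H]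
    (K : Submodule ℝ H) [FiniteDimensional ℝ K] (u : H) :
    (⨅ g : K, ‖(g : H) - u‖ ^ 2) = ‖u‖ ^ 2 - ‖(Submodule.orthogonalProjectionOnto K u : H)‖ ^ 2 := by
  set P := (Submodule.orthogonalProjectionOnto K u : H) with hP
  have hbdd : BddBelow (Set.range fun g : K => ‖(g : H) - u‖ ^ 2) :=
    ⟨0, by rintro y ⟨g', rfl⟩; positivity⟩
  have hmin : ∀ g : K, ‖u - P‖ ≤ ‖u - (g : H)‖ := by
    intro g
    rw [hP, ← Submodule.starProjection_apply, Submodule.starProjection_minimal]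
    exact ciInf_le ⟨0, by rintro y ⟨g', rfl⟩; positivity⟩ g
  have hPy : ⟪u - P, P⟫ = 0 :=
    Submodule.starProjection_inner_eq_zero (K := K) u P (Submodule.coe_mem _)
  have hpyth : ‖u‖ ^ 2 = ‖P‖ ^ 2 + ‖u - P‖ ^ 2 := by
    have h := norm_add_sq_real P (u - P)
    rw [add_sub_cancel] at h
    rw [h, real_inner_comm, hPy]; ring
  have hinf : (⨅ g : K, ‖(g : H) - u‖ ^ 2) = ‖u - P‖ ^ 2 := by
    apply le_antisymm
    · have h := ciInf_le (f := fun g : K => ‖(g : H) - u‖ ^ 2) hbdd (Submodule.orthogonalProjectionOnto K u)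
      simpa [norm_sub_rev, hP] using h
    · refine le_ciInf fun g => ?_
      have h := (hmin g).trans_eq (norm_sub_rev u (g : H))
      exact pow_le_pow_left₀ (norm_nonneg _) h 2
  rw [hinf]; linarith [hpyth]

/-- **Dimension lower bound (random subspace version; Theorem 1 of the paper).**
Let `φ 1, …, φ N` be unit-norm vectors in a real Hilbert space `H`, and let
`W : Ω → Submodule ℝ H` be a random finite-dimensional subspace (on a
probability space `(Ω, μ)`) such that `ω ↦ dim (W ω)` and each
`ω ↦ inf_{g ∈ W ω} ‖g - φ i‖²` are (measurable and) integrable.  With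
`r = E[dim W]` and `ε = (1/N) ∑ i, E[inf_{g ∈ W} ‖g - φ i‖²]`, we have
`r ≥ N (1 - ε) / (1 + √(∑_{i ≠ j} ⟨φ i, φ j⟩²))`. -/
theorem dimension_lower_bound_random
    {H : Type*} [NormedAddCommGroup H] [InnerProductSpace ℝ H] [CompleteSpace H]
    {Ω : Type*} [MeasurableSpace Ω] (μ : Measure Ω) [IsProbabilityMeasure μ]
    (N : ℕ) (φ : Fin N → H) (hφ : ∀ i, ‖φ i‖ ^ 2 = 1)
    (W : Ω → Submodule ℝ H) (hWfin : ∀ ω, FiniteDimensional ℝ (W ω))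
    (hdim : Integrable (fun ω => (Module.finrank ℝ (W ω) : ℝ)) μ)
    (hinf : ∀ i, Integrable (fun ω => ⨅ g : W ω, ‖(g : H) - φ i‖ ^ 2) μ)
    (r : ℝ) (hr : r = ∫ ω, (Module.finrank ℝ (W ω) : ℝ) ∂μ)
    (ε : ℝ)
    (hε : ε = (1 / (N : ℝ)) * ∑ i, ∫ ω, (⨅ g : W ω, ‖(g : H) - φ i‖ ^ 2) ∂μ) :
    r ≥ (N : ℝ) * (1 - ε) /
      (1 + Real.sqrt (∑ p ∈ (univ : Finset (Fin N × Fin N)).filter (fun p => p.1 ≠ p.2),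
        ⟪φ p.1, φ p.2⟫ ^ 2)) := by
  classical
  set S := ∑ p ∈ (univ : Finset (Fin N × Fin N)).filter (fun p => p.1 ≠ p.2),
    ⟪φ p.1, φ p.2⟫ ^ 2 with hSdef
  have hS0 : 0 ≤ S := Finset.sum_nonneg fun p _ => sq_nonneg _
  have hsqrt0 : 0 ≤ Real.sqrt S := Real.sqrt_nonneg _
  have hden : 0 < 1 + Real.sqrt S := by linarith
  rw [ge_iff_le, div_le_iff₀ hden]
  -- goal : N * (1 - ε) ≤ r * (1 + √S)
  have hNε : (N : ℝ) * ε = ∑ i, ∫ ω, (⨅ g : W ω, ‖(g : H) - φ i‖ ^ 2) ∂μ := by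
    rcases Nat.eq_zero_or_pos N with h0 | hpos
    · subst h0; simp [hε]
    · rw [hε]
      have hN0 : (N : ℝ) ≠ 0 := Nat.cast_ne_zero.mpr hpos.ne'
      field_simp
  have key : ∀ ω, ∑ i, (1 - (⨅ g : W ω, ‖(g : H) - φ i‖ ^ 2))
      ≤ (1 + Real.sqrt S) * (Module.finrank ℝ (W ω) : ℝ) := by
    intro ω
    haveI := hWfin ω
    have hrw : ∀ i, (⨅ g : W ω, ‖(g : H) - φ i‖ ^ 2)
        = 1 - ‖(Submodule.orthogonalProjectionOnto (W ω) (φ i) : H)‖ ^ 2 := fun i => by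
      rw [keyC_dlbr (W ω) (φ i), hφ i]
    calc ∑ i, (1 - (⨅ g : W ω, ‖(g : H) - φ i‖ ^ 2))
        = ∑ i, ‖(Submodule.orthogonalProjectionOnto (W ω) (φ i) : H)‖ ^ 2 := by
          refine Finset.sum_congr rfl fun i _ => ?_
          rw [hrw i]; ring
      _ ≤ (Module.finrank ℝ (W ω) : ℝ) * (1 + Real.sqrt S) := keyB_dlbr N φ hφ (W ω)
      _ = (1 + Real.sqrt S) * (Module.finrank ℝ (W ω) : ℝ) := mul_comm _ _
  have hint1 : Integrable (fun ω => ∑ i, (1 - (⨅ g : W ω, ‖(g : H) - φ i‖ ^ 2))) μ :=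
    integrable_finset_sum _ fun i _ => (integrable_const 1).sub (hinf i)
  have hint2 : Integrable (fun ω => (1 + Real.sqrt S) * (Module.finrank ℝ (W ω) : ℝ)) μ :=
    hdim.const_mul _
  have hmono := integral_mono hint1 hint2 key
  have hL : ∫ ω, ∑ i, (1 - (⨅ g : W ω, ‖(g : H) - φ i‖ ^ 2)) ∂μ
      = (N : ℝ) - ∑ i, ∫ ω, (⨅ g : W ω, ‖(g : H) - φ i‖ ^ 2) ∂μ := by
    rw [integral_finset_sum (μ := μ) univ
      (f := fun (i : Fin N) ω => 1 - (⨅ g : W ω, ‖(g : H) - φ i‖ ^ 2))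
      (fun i _ => (integrable_const 1).sub (hinf i))]
    have h1 : ∀ i ∈ (univ : Finset (Fin N)),
        ∫ ω, (1 - (⨅ g : W ω, ‖(g : H) - φ i‖ ^ 2)) ∂μ
          = 1 - ∫ ω, (⨅ g : W ω, ‖(g : H) - φ i‖ ^ 2) ∂μ := fun i _ => by
      rw [integral_sub (integrable_const 1) (hinf i)]
      simp
    rw [Finset.sum_congr rfl h1, Finset.sum_sub_distrib]
    simp
  have hR : ∫ ω, (1 + Real.sqrt S) * (Module.finrank ℝ (W ω) : ℝ) ∂μ
      = (1 + Real.sqrt S) * r := by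
    rw [integral_const_mul, ← hr]
  rw [hL, hR] at hmono
  nlinarith [hmono, hNε]
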